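/- Let a ∈ ℕⁿ be weakly increasing, π ∈ S_n, and b = I(π) + a ∘ π⁻¹. Define p(b)_i = j if i ∈ Z_j(b) \ Z_{j−1}(b). Then b − p(b) = 1 + I(π), i.e. b_i − p(b)_i = 1 + I(π)_i for every i ∈ [n]. -/

import Mathlib

/-- Inversion table: `I(π)_i = |{j < π⁻¹(i) : π(j) > i}|`. -/
def invTable {n : ℕ} (π : Equiv.Perm (Fin n)) (i : Fin n) : ℕ :=
  (Finset.univ.filter (fun j => j < π.symm i ∧ i < π j)).card

/-- The `p`-center `Z_p(a)`: the largest subset `{x_1 > ⋯ > x_q}` of `[n]` with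
`a_{x_j} ≤ p + j` for all `j`, obtained greedily from the largest index down. -/
def Zset (n p : ℕ) (a : Fin n → ℕ) : Finset (Fin n) :=
  (List.finRange n).reverse.foldl
    (fun s i => if a i ≤ p + s.card + 1 then insert i s else s) ∅

section Aux

variable {n : ℕ} (π : Equiv.Perm (Fin n)) (a : Fin n → ℕ)

private def Sp (p : ℕ) : Finset (Fin n) :=
  Finset.univ.filter (fun j : Fin n => a (π.symm j) ≤ p + 1)

private lemma inv_le_card (hmono : Monotone a) (p : ℕ) (i : Fin n)
    (hi : a (π.symm i) ≤ p + 1) :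
    invTable π i ≤ ((Sp π a p).filter (fun j => i < j)).card := by
  unfold invTable Sp
  apply Finset.card_le_card_of_injOn (fun j => π j)
  · intro j hj
    simp only [Finset.mem_coe, Finset.mem_filter, Finset.mem_univ, true_and] at hj ⊢
    obtain ⟨h1, h2⟩ := hj
    refine ⟨?_, h2⟩
    rw [Equiv.symm_apply_apply]
    exact le_trans (hmono h1.le) hi
  · intro x _ y _ h; exact π.injective h

private lemma card_le_inv (hmono : Monotone a) (p : ℕ) (i : Fin n)
    (hi : p + 1 < a (π.symm i)) :
    ((Sp π a p).filter (fun j => i < j)).card ≤ invTable π i := by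
  unfold invTable Sp
  apply Finset.card_le_card_of_injOn (fun k => π.symm k)
  · intro k hk
    simp only [Finset.mem_coe, Finset.mem_filter, Finset.mem_univ, true_and] at hk ⊢
    obtain ⟨h1, h2⟩ := hk
    constructor
    · by_contra h
      push_neg at h
      exact absurd (hmono h) (by omega)
    · rw [Equiv.apply_symm_apply]; exact h2
  · intro x _ y _ h; exact π.symm.injective h

private def bfun : Fin n → ℕ := fun j => invTable π j + a (π.symm j)

private lemma fold_step (hmono : Monotone a) (p : ℕ) (m : ℕ) (hm : m < n) :
    (if bfun π a ⟨m, hm⟩ ≤ p + ((Sp π a p).filter (fun j => m + 1 ≤ j.val)).card + 1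
      then insert ⟨m, hm⟩ ((Sp π a p).filter (fun j => m + 1 ≤ j.val))
      else (Sp π a p).filter (fun j => m + 1 ≤ j.val))
      = (Sp π a p).filter (fun j => m ≤ j.val) := by
  set i : Fin n := ⟨m, hm⟩ with hidef
  have hfe : (Sp π a p).filter (fun j => m + 1 ≤ j.val)
      = (Sp π a p).filter (fun j => i < j) := by
    apply Finset.filter_congr
    intro j _
    simp only [Fin.lt_def, hidef, Fin.val_mk]
    omega
  by_cases hi : a (π.symm i) ≤ p + 1
  · rw [if_pos]
    · ext j
      simp only [Finset.mem_insert, Finset.mem_filter, Sp, Finset.mem_univ, true_and]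
      constructor
      · rintro (rfl | ⟨h1, h2⟩)
        · exact ⟨hi, le_refl m⟩
        · exact ⟨h1, by omega⟩
      · rintro ⟨h1, h2⟩
        rcases Nat.eq_or_lt_of_le h2 with h | h
        · left; exact Fin.ext h.symm
        · right; exact ⟨h1, h⟩
    · rw [hfe]
      have := inv_le_card π a hmono p i hi
      unfold bfun
      omega
  · push_neg at hi
    rw [if_neg]
    · apply Finset.filter_congr
      intro j hj
      simp only [Sp, Finset.mem_filter, Finset.mem_univ, true_and] at hj
      constructor
      · omega
      · intro h
        rcases Nat.eq_or_lt_of_le h with h' | h'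
        · exfalso
          have : j = i := Fin.ext h'.symm
          rw [this] at hj; omega
        · omega
    · rw [hfe]
      have := card_le_inv π a hmono p i hi
      unfold bfun
      omega

private lemma fold_main (hmono : Monotone a) (p : ℕ) : ∀ m, (hm : m ≤ n) →
    (((List.finRange n).reverse.drop (n - m)).foldl
      (fun s i => if bfun π a i ≤ p + s.card + 1 then insert i s else s)
      ((Sp π a p).filter (fun j => m ≤ j.val))) = Sp π a p := by
  intro m
  induction m with
  | zero =>
    intro _
    rw [Nat.sub_zero]
    rw [List.drop_eq_nil_of_le (by simp)]
    simp only [List.foldl_nil]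
    apply Finset.filter_true_of_mem
    intros; exact Nat.zero_le _
  | succ m ih =>
    intro hm
    have hmn : m < n := hm
    have hdrop : (List.finRange n).reverse.drop (n - (m + 1))
        = ⟨m, hmn⟩ :: (List.finRange n).reverse.drop (n - m) := by
      have hlt : n - (m + 1) < (List.finRange n).reverse.length := by
        simp; omega
      rw [List.drop_eq_getElem_cons hlt]
      congr 1
      · rw [List.getElem_reverse]
        simp only [List.getElem_finRange, List.length_finRange]
        apply Fin.ext
        simp [Fin.cast]
        omega
      · congr 1
        omega
    rw [hdrop, List.foldl_cons, fold_step π a hmono p m hmn, ih (le_of_lt hm)]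

private lemma Zset_eq (hmono : Monotone a) (p : ℕ) : Zset n p (bfun π a) = Sp π a p := by
  have h0 : (Sp π a p).filter (fun j => n ≤ j.val) = ∅ := by
    apply Finset.filter_false_of_mem
    intro j _
    simp only [not_le]
    exact j.isLt
  have := fold_main π a hmono p n (le_refl n)
  rw [Nat.sub_self, List.drop_zero, h0] at this
  unfold Zset
  exact this

end Aux

theorem stmt17 {n : ℕ} (π : Equiv.Perm (Fin n)) (a : Fin n → ℕ) (ha : ∀ i, 0 < a i)
    (hmono : Monotone a) (i : Fin n) :
    let b : Fin n → ℕ := fun j => invTable π j + a (π.symm j)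
    b i - sInf {j : ℕ | i ∈ Zset n j b} = 1 + invTable π i := by
  intro b
  have hb : b = bfun π a := rfl
  have hmem : ∀ p : ℕ, (i ∈ Zset n p b ↔ a (π.symm i) ≤ p + 1) := by
    intro p
    rw [hb, Zset_eq π a hmono p]
    simp [Sp]
  set c := a (π.symm i) with hc
  have hc1 : 1 ≤ c := ha _
  have hset : {j : ℕ | i ∈ Zset n j b} = Set.Ici (c - 1) := by
    ext j
    simp only [Set.mem_setOf_eq, Set.mem_Ici, hmem j]
    omega
  rw [hset, csInf_Ici]
  show invTable π i + c - (c - 1) = 1 + invTable π i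
  omega
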